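/- arXiv:0809.3875 — 4 statements merged into one kernel-verified Lean document; each statement's English description precedes it below -/
import Mathlib

section
/- Let 0 < a ≤ b and let n ≥ 2 be an integer. Then the number of pairs (p,q) of positive integers satisfying p²/a² + q²/b² < 1/a² + n²/b² is equal to n − 1 if and only if a²/b² ≤ 3/(n² − 1). (Equivalently: λ_{1,n} = π²(1/a² + n²/b²) is the n-th eigenvalue of the Dirichlet Laplacian on the rectangle, i.e. exactly n − 1 eigenvalues lie strictly below it, precisely when a²/b² ≤ 3/(n² − 1).) -/
lemma aux_fin (N M : ℕ) : {pq : ℕ+ × ℕ+ | (pq.1 : ℕ) ≤ N ∧ (pq.2 : ℕ) ≤ M}.Finite := by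
  have h : {pq : ℕ+ × ℕ+ | (pq.1 : ℕ) ≤ N ∧ (pq.2 : ℕ) ≤ M}
      = (fun pq : ℕ+ × ℕ+ => ((pq.1 : ℕ), (pq.2 : ℕ))) ⁻¹' (Set.Iic N ×ˢ Set.Iic M) := rfl
  rw [h]
  apply Set.Finite.preimage _ ((Set.finite_Iic N).prod (Set.finite_Iic M))
  intro x _ y _ hxy
  have h1 := congrArg Prod.fst hxy
  have h2 := congrArg Prod.snd hxy
  simp only at h1 h2
  exact Prod.ext (PNat.coe_injective h1) (PNat.coe_injective h2)

lemma aux_count (n : ℕ) :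
    {pq : ℕ+ × ℕ+ | pq.1 = 1 ∧ (pq.2 : ℕ) < n}.ncard = n - 1 := by
  have h1 : {pq : ℕ+ × ℕ+ | pq.1 = 1 ∧ (pq.2 : ℕ) < n}
      = (fun q : ℕ+ => ((1 : ℕ+), q)) '' {q : ℕ+ | (q : ℕ) < n} := by
    ext ⟨p, q⟩
    constructor
    · rintro ⟨rfl, hq⟩; exact ⟨q, hq, rfl⟩
    · rintro ⟨q', hq', h⟩
      rw [Prod.mk.injEq] at h
      exact ⟨h.1.symm, h.2 ▸ hq'⟩
  rw [h1, Set.ncard_image_of_injective _ (fun x y h => by simpa using h)]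
  have h2 : ((↑) : ℕ+ → ℕ) '' {q : ℕ+ | (q : ℕ) < n} = Set.Ico 1 n := by
    ext k
    constructor
    · rintro ⟨q, hq, rfl⟩; exact ⟨q.one_le, hq⟩
    · rintro ⟨h1k, h2k⟩; exact ⟨⟨k, h1k⟩, h2k, rfl⟩
  rw [← Set.ncard_image_of_injective _ PNat.coe_injective, h2, ← Finset.coe_Ico,
    Set.ncard_coe_finset, Nat.card_Ico]

set_option maxHeartbeats 1000000 in
/-- For `0 < a ≤ b` and an integer `n ≥ 2`, the number of pairs `(p,q)`
of positive integers with `p²/a² + q²/b² < 1/a² + n²/b²` equals `n - 1` if and only if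
`a²/b² ≤ 3/(n² - 1)`; i.e. `λ_{1,n} = π²(1/a² + n²/b²)` is the `n`-th Dirichlet
eigenvalue of the rectangle (exactly `n - 1` eigenvalues lie strictly below it)
precisely when `a²/b² ≤ 3/(n² - 1)`. -/
theorem lambda_one_n_is_nth_eigenvalue_iff (a b : ℝ) (ha : 0 < a) (hab : a ≤ b)
    (n : ℕ) (hn : 2 ≤ n) :
    {pq : ℕ+ × ℕ+ |
        (pq.1 : ℝ) ^ 2 / a ^ 2 + (pq.2 : ℝ) ^ 2 / b ^ 2
          < 1 / a ^ 2 + (n : ℝ) ^ 2 / b ^ 2}.ncard = n - 1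
      ↔ a ^ 2 / b ^ 2 ≤ 3 / ((n : ℝ) ^ 2 - 1) := by
  have hb : (0:ℝ) < b := lt_of_lt_of_le ha hab
  have ha2 : (0:ℝ) < a ^ 2 := by positivity
  have hb2 : (0:ℝ) < b ^ 2 := by positivity
  have hab2 : a ^ 2 ≤ b ^ 2 := by nlinarith
  have hn1 : (1:ℝ) < (n:ℝ) := by
    have : (2:ℝ) ≤ (n:ℝ) := by exact_mod_cast hn
    linarith
  have hn2 : (0:ℝ) < (n:ℝ) ^ 2 - 1 := by nlinarith
  set S := {pq : ℕ+ × ℕ+ |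
        (pq.1 : ℝ) ^ 2 / a ^ 2 + (pq.2 : ℝ) ^ 2 / b ^ 2
          < 1 / a ^ 2 + (n : ℝ) ^ 2 / b ^ 2} with hS
  have hmem : ∀ p q : ℕ+, ((p, q) ∈ S) ↔
      ((p:ℝ) ^ 2 - 1) * b ^ 2 < ((n:ℝ) ^ 2 - (q:ℝ) ^ 2) * a ^ 2 := by
    intro p q
    simp only [hS, Set.mem_setOf_eq]
    rw [div_add_div _ _ (ne_of_gt ha2) (ne_of_gt hb2),
      div_add_div _ _ (ne_of_gt ha2) (ne_of_gt hb2),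
      div_lt_div_iff₀ (by positivity) (by positivity)]
    constructor
    · intro h
      have h' : (p:ℝ) ^ 2 * b ^ 2 + a ^ 2 * (q:ℝ) ^ 2 < 1 * b ^ 2 + a ^ 2 * (n:ℝ) ^ 2 :=
        lt_of_mul_lt_mul_right h (by positivity)
      nlinarith [h']
    · intro h
      have h' : (p:ℝ) ^ 2 * b ^ 2 + a ^ 2 * (q:ℝ) ^ 2 < 1 * b ^ 2 + a ^ 2 * (n:ℝ) ^ 2 := by
        nlinarith [h]
      exact mul_lt_mul_of_pos_right h' (by positivity)
  have hrhs : (a ^ 2 / b ^ 2 ≤ 3 / ((n : ℝ) ^ 2 - 1)) ↔ a ^ 2 * ((n:ℝ) ^ 2 - 1) ≤ 3 * b ^ 2 := by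
    rw [div_le_div_iff₀ hb2 hn2]
  -- basic pairs (1, q) for q < n are always in S
  have hbase : ∀ q : ℕ+, (q : ℕ) < n → ((1:ℕ+), q) ∈ S := by
    intro q hq
    rw [hmem]
    have hqr : (q:ℝ) < (n:ℝ) := by exact_mod_cast hq
    have hq1 : (1:ℝ) ≤ (q:ℝ) := by exact_mod_cast q.one_le
    have hqn : (q:ℝ) ^ 2 < (n:ℝ) ^ 2 := by nlinarith
    have := mul_pos (show (0:ℝ) < (n:ℝ) ^ 2 - (q:ℝ) ^ 2 by linarith) ha2
    push_cast
    nlinarith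
  -- any member has q < n
  have hqlt : ∀ p q : ℕ+, (p, q) ∈ S → (q : ℕ) < n := by
    intro p q hpq
    rw [hmem] at hpq
    have hp1 : (1:ℝ) ≤ (p:ℝ) := by exact_mod_cast p.one_le
    have hp2' : (1:ℝ) ≤ (p:ℝ) ^ 2 := one_le_pow₀ hp1
    have h0 : (0:ℝ) ≤ ((p:ℝ) ^ 2 - 1) * b ^ 2 := mul_nonneg (by linarith) hb2.le
    have hq2 : (q:ℝ) ^ 2 < (n:ℝ) ^ 2 := by nlinarith
    have hq0 : (0:ℝ) ≤ (q:ℝ) := by positivity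
    have : (q:ℝ) < (n:ℝ) := by nlinarith
    exact_mod_cast this
  -- any member has p ≤ n
  have hplt : ∀ p q : ℕ+, (p, q) ∈ S → (p : ℕ) ≤ n := by
    intro p q hpq
    rw [hmem] at hpq
    have hq1 : (1:ℝ) ≤ (q:ℝ) := by exact_mod_cast q.one_le
    have hq2' : (1:ℝ) ≤ (q:ℝ) ^ 2 := one_le_pow₀ hq1
    have h1 : ((n:ℝ) ^ 2 - (q:ℝ) ^ 2) * a ^ 2 ≤ ((n:ℝ) ^ 2 - 1) * b ^ 2 := by
      rcases le_or_gt ((n:ℝ) ^ 2 - (q:ℝ) ^ 2) 0 with h | h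
      · have h2 := mul_nonpos_of_nonpos_of_nonneg h ha2.le
        nlinarith
      · have h2 := mul_le_mul_of_nonneg_left hab2 h.le
        nlinarith
    have hp2 : (p:ℝ) ^ 2 < (n:ℝ) ^ 2 := by nlinarith
    have hp0 : (0:ℝ) ≤ (p:ℝ) := by positivity
    have : (p:ℝ) < (n:ℝ) := by nlinarith
    exact le_of_lt (by exact_mod_cast this)
  have hfin : S.Finite := by
    apply (aux_fin n n).subset
    rintro ⟨p, q⟩ hpq
    exact ⟨hplt p q hpq, le_of_lt (hqlt p q hpq)⟩
  constructor
  · intro hcard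
    by_contra hC
    rw [hrhs] at hC
    push_neg at hC
    have h21 : ((2:ℕ+), (1:ℕ+)) ∈ S := by
      rw [hmem]
      push_cast
      nlinarith
    have hsub : insert ((2:ℕ+), (1:ℕ+)) {pq : ℕ+ × ℕ+ | pq.1 = 1 ∧ (pq.2 : ℕ) < n} ⊆ S := by
      rintro ⟨p, q⟩ hpq
      rcases hpq with h | ⟨rfl, hq⟩
      · rw [h]; exact h21
      · exact hbase q hq
    have hT0fin : {pq : ℕ+ × ℕ+ | pq.1 = 1 ∧ (pq.2 : ℕ) < n}.Finite := by
      apply hfin.subset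
      rintro ⟨p, q⟩ ⟨rfl, h2⟩
      exact hbase q h2
    have hnotmem : ((2:ℕ+), (1:ℕ+)) ∉ {pq : ℕ+ × ℕ+ | pq.1 = 1 ∧ (pq.2 : ℕ) < n} := by
      rintro ⟨h1, -⟩
      exact absurd h1 (by decide)
    have hins := Set.ncard_insert_of_notMem hnotmem hT0fin
    rw [aux_count] at hins
    have hle : n - 1 + 1 ≤ S.ncard := hins ▸ Set.ncard_le_ncard hsub hfin
    omega
  · intro hC
    rw [hrhs] at hC
    have hSeq : S = {pq : ℕ+ × ℕ+ | pq.1 = 1 ∧ (pq.2 : ℕ) < n} := by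
      ext ⟨p, q⟩
      simp only [Set.mem_setOf_eq]
      constructor
      · intro hpq
        refine ⟨?_, hqlt p q hpq⟩
        rw [hmem] at hpq
        by_contra hp1
        have h2p : (2:ℕ) ≤ (p:ℕ) := by
          have h1 : 1 ≤ (p:ℕ) := p.one_le
          have hne : (p:ℕ) ≠ 1 := fun h => hp1 (PNat.coe_injective h)
          omega
        have h2pr : (2:ℝ) ≤ (p:ℝ) := by exact_mod_cast h2p
        have hq1 : (1:ℝ) ≤ (q:ℝ) := by exact_mod_cast q.one_le
        have hp4 : (4:ℝ) ≤ (p:ℝ) ^ 2 := by nlinarith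
        have hA : (3:ℝ) * b ^ 2 ≤ ((p:ℝ) ^ 2 - 1) * b ^ 2 := by
          nlinarith [mul_nonneg (show (0:ℝ) ≤ (p:ℝ) ^ 2 - 4 by linarith) hb2.le]
        have hq2' : (1:ℝ) ≤ (q:ℝ) ^ 2 := one_le_pow₀ hq1
        have hB : ((n:ℝ) ^ 2 - (q:ℝ) ^ 2) * a ^ 2 ≤ a ^ 2 * ((n:ℝ) ^ 2 - 1) := by
          nlinarith [mul_nonneg (show (0:ℝ) ≤ (q:ℝ) ^ 2 - 1 by linarith) ha2.le]
        linarith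
      · rintro ⟨rfl, hq⟩
        exact hbase q hq
    rw [hSeq, aux_count]
end

section
/- Let 0 < a ≤ b with a²/b² = 3/8. Then 1/a² + 9/b² = 4/a² + 1/b²; exactly two pairs of positive integers, namely (1,1) and (1,2), satisfy p²/a² + q²/b² < 1/a² + 9/b²; exactly two pairs, namely (1,3) and (2,1), satisfy p²/a² + q²/b² = 1/a² + 9/b²; and every other pair (p,q) of positive integers satisfies p²/a² + q²/b² > 1/a² + 9/b². (Thus at the critical ratio a²/b² = 3/8 the third Dirichlet eigenvalue of the rectangle is a double eigenvalue, λ₃ = λ₄ = π²(1/a² + 9/b²).) -/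
lemma nat_lt_iff' (P Q : ℕ) (hP : 1 ≤ P) (hQ : 1 ≤ Q) :
    8*P^2+3*Q^2 < 35 ↔ (P=1∧Q=1)∨(P=1∧Q=2) := by
  constructor
  · intro h
    have h1 : P ≤ 2 := by nlinarith
    have h2 : Q ≤ 3 := by nlinarith
    interval_cases P <;> interval_cases Q <;> omega
  · rintro (⟨rfl,rfl⟩|⟨rfl,rfl⟩) <;> norm_num

lemma nat_eq_iff' (P Q : ℕ) (hP : 1 ≤ P) (hQ : 1 ≤ Q) :
    8*P^2+3*Q^2 = 35 ↔ (P=1∧Q=3)∨(P=2∧Q=1) := by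
  constructor
  · intro h
    have h1 : P ≤ 2 := by nlinarith
    have h2 : Q ≤ 3 := by nlinarith
    interval_cases P <;> interval_cases Q <;> omega
  · rintro (⟨rfl,rfl⟩|⟨rfl,rfl⟩) <;> norm_num

/-- Let `0 < a ≤ b` with `a²/b² = 3/8`. Then `1/a² + 9/b² = 4/a² + 1/b²`;
exactly the two pairs `(1,1)` and `(1,2)` of positive integers satisfy
`p²/a² + q²/b² < 1/a² + 9/b²`; exactly the two pairs `(1,3)` and `(2,1)` satisfy
`p²/a² + q²/b² = 1/a² + 9/b²`; and every other pair satisfies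
`p²/a² + q²/b² > 1/a² + 9/b²`. (Thus at the critical ratio the third Dirichlet
eigenvalue of the rectangle is double: `λ₃ = λ₄ = π²(1/a² + 9/b²)`.) -/
theorem critical_ratio_double_eigenvalue (a b : ℝ) (ha : 0 < a) (hab : a ≤ b)
    (hratio : a ^ 2 / b ^ 2 = 3 / 8) :
    (1 / a ^ 2 + 9 / b ^ 2 = 4 / a ^ 2 + 1 / b ^ 2)
    ∧ {pq : ℕ+ × ℕ+ |
          (pq.1 : ℝ) ^ 2 / a ^ 2 + (pq.2 : ℝ) ^ 2 / b ^ 2 < 1 / a ^ 2 + 9 / b ^ 2}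
        = {((1 : ℕ+), (1 : ℕ+)), ((1 : ℕ+), (2 : ℕ+))}
    ∧ {pq : ℕ+ × ℕ+ |
          (pq.1 : ℝ) ^ 2 / a ^ 2 + (pq.2 : ℝ) ^ 2 / b ^ 2 = 1 / a ^ 2 + 9 / b ^ 2}
        = {((1 : ℕ+), (3 : ℕ+)), ((2 : ℕ+), (1 : ℕ+))}
    ∧ ∀ pq : ℕ+ × ℕ+,
        pq ∉ ({((1 : ℕ+), (1 : ℕ+)), ((1 : ℕ+), (2 : ℕ+)), ((1 : ℕ+), (3 : ℕ+)),
                ((2 : ℕ+), (1 : ℕ+))} : Set (ℕ+ × ℕ+)) →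
        (pq.1 : ℝ) ^ 2 / a ^ 2 + (pq.2 : ℝ) ^ 2 / b ^ 2 > 1 / a ^ 2 + 9 / b ^ 2 := by
  have hb : 0 < b := ha.trans_le hab
  have ha2 : (0:ℝ) < a^2 := by positivity
  have hb2 : (0:ℝ) < b^2 := by positivity
  have hkey : b^2 = 8/3 * a^2 := by
    field_simp at hratio; nlinarith [hratio]
  have h8 : (0:ℝ) < 8*a^2 := by positivity
  have hform : ∀ p q : ℕ+, (p:ℝ)^2/a^2 + (q:ℝ)^2/b^2 = (8*(p:ℝ)^2+3*(q:ℝ)^2)/(8*a^2) := by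
    intro p q; rw [hkey]; field_simp
  have hthresh : 1/a^2 + 9/b^2 = 35/(8*a^2) := by rw [hkey]; field_simp; ring
  have heq1 : 4/a^2 + 1/b^2 = 35/(8*a^2) := by rw [hkey]; field_simp; ring
  have hltiff : ∀ p q : ℕ+, ((p:ℝ)^2/a^2 + (q:ℝ)^2/b^2 < 1/a^2+9/b^2
      ↔ 8*(p:ℕ)^2+3*(q:ℕ)^2 < 35) := by
    intro p q
    rw [hform, hthresh, div_lt_div_iff_of_pos_right h8]
    exact_mod_cast Iff.rfl
  have heqiff : ∀ p q : ℕ+, ((p:ℝ)^2/a^2 + (q:ℝ)^2/b^2 = 1/a^2+9/b^2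
      ↔ 8*(p:ℕ)^2+3*(q:ℕ)^2 = 35) := by
    intro p q
    rw [hform, hthresh, div_left_inj' (ne_of_gt h8)]
    exact_mod_cast Iff.rfl
  have hgtiff : ∀ p q : ℕ+, ((p:ℝ)^2/a^2 + (q:ℝ)^2/b^2 > 1/a^2+9/b^2
      ↔ 35 < 8*(p:ℕ)^2+3*(q:ℕ)^2) := by
    intro p q
    rw [gt_iff_lt, hform, hthresh, div_lt_div_iff_of_pos_right h8]
    exact_mod_cast Iff.rfl
  refine ⟨by rw [hthresh, heq1], ?_, ?_, ?_⟩
  · ext ⟨p,q⟩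
    simp only [Set.mem_setOf_eq, Set.mem_insert_iff, Set.mem_singleton_iff, Prod.mk.injEq]
    rw [hltiff]
    constructor
    · intro h
      rcases (nat_lt_iff' _ _ p.one_le q.one_le).mp h with ⟨h1,h2⟩|⟨h1,h2⟩
      · exact Or.inl ⟨PNat.coe_injective h1, PNat.coe_injective h2⟩
      · exact Or.inr ⟨PNat.coe_injective h1, PNat.coe_injective h2⟩
    · rintro (⟨rfl,rfl⟩|⟨rfl,rfl⟩) <;> norm_num
  · ext ⟨p,q⟩
    simp only [Set.mem_setOf_eq, Set.mem_insert_iff, Set.mem_singleton_iff, Prod.mk.injEq]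
    rw [heqiff]
    constructor
    · intro h
      rcases (nat_eq_iff' _ _ p.one_le q.one_le).mp h with ⟨h1,h2⟩|⟨h1,h2⟩
      · exact Or.inl ⟨PNat.coe_injective h1, PNat.coe_injective h2⟩
      · exact Or.inr ⟨PNat.coe_injective h1, PNat.coe_injective h2⟩
    · rintro (⟨rfl,rfl⟩|⟨rfl,rfl⟩) <;> norm_num
  · rintro ⟨p,q⟩ hnot
    simp only [Set.mem_insert_iff, Set.mem_singleton_iff, Prod.mk.injEq, not_or] at hnot
    rw [hgtiff]
    rcases lt_trichotomy (8*(p:ℕ)^2+3*(q:ℕ)^2) 35 with h|h|h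
    · rcases (nat_lt_iff' _ _ p.one_le q.one_le).mp h with ⟨h1,h2⟩|⟨h1,h2⟩
      · exact absurd ⟨PNat.coe_injective h1, PNat.coe_injective h2⟩ hnot.1
      · exact absurd ⟨PNat.coe_injective h1, PNat.coe_injective h2⟩ hnot.2.1
    · rcases (nat_eq_iff' _ _ p.one_le q.one_le).mp h with ⟨h1,h2⟩|⟨h1,h2⟩
      · exact absurd ⟨PNat.coe_injective h1, PNat.coe_injective h2⟩ hnot.2.2.1
      · exact absurd ⟨PNat.coe_injective h1, PNat.coe_injective h2⟩ hnot.2.2.2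
    · exact h
end

section
/- Set ε = √(3/8) and let (α,β) ∈ ℝ² with (α,β) ≠ (0,0). Then the zero set of φ_{α,β} has no critical point inside the rectangle: for every (x,y) in the open rectangle (−πε/2, πε/2) × (−π/2, π/2) with φ_{α,β}(x,y) = 0, the gradient ∇φ_{α,β}(x,y) = (∂_xφ_{α,β}(x,y), ∂_yφ_{α,β}(x,y)) is not equal to (0,0). -/
open Real

noncomputable section

/-- The critical aspect ratio `ε = √(3/8)`. -/
def epsc : ℝ := Real.sqrt (3 / 8)

/-- The eigenfunction `φ_{α,β}(x,y) = α cos(x/ε) cos(3y) + β sin(2x/ε) cos(y)`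
for the double eigenvalue at the critical ratio `ε = √(3/8)`. -/
def phiAB (α β x y : ℝ) : ℝ :=
  α * Real.cos (x / epsc) * Real.cos (3 * y) + β * Real.sin (2 * x / epsc) * Real.cos y

/-- For `ε = √(3/8)` and `(α,β) ≠ (0,0)`, the zero set of `φ_{α,β}`
has no critical point inside the rectangle `(−πε/2, πε/2) × (−π/2, π/2)`: at every
zero of `φ_{α,β}` inside the open rectangle, the gradient
`(∂ₓφ_{α,β}, ∂_yφ_{α,β})` does not vanish. -/
theorem no_interior_critical_point (α β : ℝ) (hαβ : (α, β) ≠ (0, 0)) (x y : ℝ)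
    (hx : x ∈ Set.Ioo (-(π * epsc / 2)) (π * epsc / 2))
    (hy : y ∈ Set.Ioo (-(π / 2)) (π / 2))
    (hzero : phiAB α β x y = 0) :
    ¬ (deriv (fun t => phiAB α β t y) x = 0 ∧ deriv (fun t => phiAB α β x t) y = 0) := by
  rintro ⟨hB, hC⟩
  have he : (0:ℝ) < epsc := Real.sqrt_pos.mpr (by norm_num)
  obtain ⟨hx1, hx2⟩ := hx
  obtain ⟨hy1, hy2⟩ := hy
  have hu1 : -(π/2) < x / epsc := by
    rw [neg_lt, ← neg_div, div_lt_iff₀ he]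
    nlinarith
  have hu2 : x / epsc < π/2 := by
    rw [div_lt_iff₀ he]; nlinarith
  have hc : 0 < Real.cos (x/epsc) := Real.cos_pos_of_mem_Ioo ⟨hu1, hu2⟩
  have hcy : 0 < Real.cos y := Real.cos_pos_of_mem_Ioo ⟨hy1, hy2⟩
  -- x-derivative
  have h1 : HasDerivAt (fun t : ℝ => t / epsc) (1/epsc) x := by
    simpa using (hasDerivAt_id x).div_const epsc
  have h2 : HasDerivAt (fun t : ℝ => 2*t / epsc) (2/epsc) x := by
    simpa using ((hasDerivAt_id x).const_mul 2).div_const epsc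
  have hc1 : HasDerivAt (fun t : ℝ => Real.cos (t/epsc)) (-Real.sin (x/epsc) * (1/epsc)) x :=
    by have := (Real.hasDerivAt_cos (x/epsc)).comp x h1; exact this
  have hs1 : HasDerivAt (fun t : ℝ => Real.sin (2*t/epsc)) (Real.cos (2*x/epsc) * (2/epsc)) x :=
    by have := (Real.hasDerivAt_sin (2*x/epsc)).comp x h2; exact this
  have hdx : HasDerivAt (fun t => phiAB α β t y)
      (α * (-Real.sin (x/epsc) * (1/epsc)) * Real.cos (3*y)
        + β * (Real.cos (2*x/epsc) * (2/epsc)) * Real.cos y) x := by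
    simpa [phiAB, mul_assoc, mul_comm, mul_left_comm, Pi.add_def] using
      (((hc1.const_mul α).mul_const (Real.cos (3*y)))).add
        (((hs1.const_mul β).mul_const (Real.cos y)))
  rw [hdx.deriv] at hB
  -- y-derivative
  have h3 : HasDerivAt (fun t : ℝ => 3*t) 3 y := by
    simpa using (hasDerivAt_id y).const_mul 3
  have hc3 : HasDerivAt (fun t : ℝ => Real.cos (3*t)) (-Real.sin (3*y) * 3) y :=
    (Real.hasDerivAt_cos (3*y)).comp y h3
  have hdy : HasDerivAt (fun t => phiAB α β x t)
      (α * Real.cos (x/epsc) * (-Real.sin (3*y) * 3)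
        + β * Real.sin (2*x/epsc) * (-Real.sin y)) y := by
    simpa [phiAB, mul_assoc, mul_comm, mul_left_comm, Pi.add_def] using
      ((hc3.const_mul (α * Real.cos (x/epsc)))).add
        (((Real.hasDerivAt_cos y).const_mul (β * Real.sin (2*x/epsc))))
  rw [hdy.deriv] at hC
  -- rewrite double angle
  have hzero' : α * Real.cos (x/epsc) * Real.cos (3*y)
      + β * (2 * Real.sin (x/epsc) * Real.cos (x/epsc)) * Real.cos y = 0 := by
    have h := hzero
    simp only [phiAB, mul_div_assoc, Real.sin_two_mul] at h
    linarith
  have hB' : α * (-Real.sin (x/epsc) * (1/epsc)) * Real.cos (3*y)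
      + β * ((2 * Real.cos (x/epsc)^2 - 1) * (2/epsc)) * Real.cos y = 0 := by
    rw [← hB, mul_div_assoc, Real.cos_two_mul]
  have pyth : Real.sin (x/epsc)^2 + Real.cos (x/epsc)^2 = 1 := Real.sin_sq_add_cos_sq _
  have key : β * (2 * Real.cos (x/epsc)^3 * Real.cos y) * epsc = 0 := by
    have hne : epsc ≠ 0 := ne_of_gt he
    field_simp at hB'
    linear_combination Real.sin (x/epsc) * epsc * hzero' + Real.cos (x/epsc) * epsc * hB'
      - 2 * β * Real.cos (x/epsc) * Real.cos y * epsc * pyth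
  have hβ : β = 0 := by
    rcases mul_eq_zero.mp key with h | h
    · rcases mul_eq_zero.mp h with h' | h'
      · exact h'
      · exfalso; nlinarith [pow_pos hc 3]
    · exact absurd h (ne_of_gt he)
  have hα : α ≠ 0 := by
    intro h; exact hαβ (by simp [h, hβ])
  have hc3y : Real.cos (3*y) = 0 := by
    have h0 : α * Real.cos (x/epsc) * Real.cos (3*y) = 0 := by
      have := hzero'; rw [hβ] at this; linarith
    rcases mul_eq_zero.mp h0 with h | h
    · rcases mul_eq_zero.mp h with h' | h'
      · exact absurd h' hα
      · exact absurd h' (ne_of_gt hc)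
    · exact h
  have hs3y : Real.sin (3*y) = 0 := by
    rw [hβ] at hC
    have h0 : α * Real.cos (x/epsc) * (-Real.sin (3*y) * 3) = 0 := by linarith
    rcases mul_eq_zero.mp h0 with h | h
    · rcases mul_eq_zero.mp h with h' | h'
      · exact absurd h' hα
      · exact absurd h' (ne_of_gt hc)
    · rcases mul_eq_zero.mp h with h' | h'
      · linarith
      · norm_num at h'
  have := Real.sin_sq_add_cos_sq (3*y)
  rw [hs3y, hc3y] at this
  norm_num at this

end
end

section
/- Let u ∈ L²(ℝ², ℂ) satisfy Σ₁^c u = u almost everywhere. Then U₂₁ preserves the L² norm: ∫ |(1/√2)(u(x,y) + conj(u(x,−y)))|² dx dy = ∫ |u(x,y)|² dx dy. (The key identity is that Re ∫ u · conj(Σ₂^c u) = 0 whenever Σ₁^c u = u.) -/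
open MeasureTheory

noncomputable section

/-- The antilinear symmetry `Σ₁^c = iΓΣ₁`: `(Σ₁^c u)(x,y) = i·conj(u(−x,y))`. -/
def Sigma1c (u : ℝ × ℝ → ℂ) : ℝ × ℝ → ℂ :=
  fun p => Complex.I * (starRingEnd ℂ) (u (-p.1, p.2))

/-- Reflection in the second variable as a measurable equivalence. -/
def sigma2Equiv : (ℝ × ℝ) ≃ᵐ (ℝ × ℝ) :=
  (MeasurableEquiv.refl ℝ).prodCongr (MeasurableEquiv.neg ℝ)

/-- Reflection in the first variable as a measurable equivalence. -/
def sigma1Equiv : (ℝ × ℝ) ≃ᵐ (ℝ × ℝ) :=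
  (MeasurableEquiv.neg ℝ).prodCongr (MeasurableEquiv.refl ℝ)

lemma sigma2_mp : MeasurePreserving sigma2Equiv (volume : Measure (ℝ × ℝ)) volume := by
  rw [Measure.volume_eq_prod]
  exact (MeasurePreserving.id volume).prod (Measure.measurePreserving_neg volume)

lemma sigma1_mp : MeasurePreserving sigma1Equiv (volume : Measure (ℝ × ℝ)) volume := by
  rw [Measure.volume_eq_prod]
  exact (Measure.measurePreserving_neg volume).prod (MeasurePreserving.id volume)

/-- Let `u ∈ L²(ℝ², ℂ)` satisfy `Σ₁^c u = u` almost everywhere.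
Then `U₂₁ = (1/√2)(I + Σ₂^c)` preserves the `L²` norm:
`∫ |(1/√2)(u(x,y) + conj(u(x,−y)))|² dx dy = ∫ |u(x,y)|² dx dy`. -/
theorem U21_norm_preserving (u : ℝ × ℝ → ℂ)
    (hu : MemLp u 2 (volume : Measure (ℝ × ℝ)))
    (hsym : ∀ᵐ p : ℝ × ℝ, Sigma1c u p = u p) :
    (∫ p : ℝ × ℝ,
        ‖((Real.sqrt 2 : ℝ) : ℂ)⁻¹ * (u p + (starRingEnd ℂ) (u (p.1, -p.2)))‖ ^ 2)
      = ∫ p : ℝ × ℝ, ‖u p‖ ^ 2 := by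
  classical
  set w : ℝ × ℝ → ℂ := fun p => u (p.1, -p.2) with hw_def
  have hw : MemLp w 2 (volume : Measure (ℝ × ℝ)) := hu.comp_measurePreserving sigma2_mp
  -- the three integrable pieces
  have Iu : Integrable (fun p : ℝ × ℝ => ‖u p‖ ^ 2) volume :=
    (memLp_two_iff_integrable_sq_norm hu.1).mp hu
  have Iw : Integrable (fun p : ℝ × ℝ => ‖w p‖ ^ 2) volume :=
    (memLp_two_iff_integrable_sq_norm hw.1).mp hw
  have Imul : Integrable (fun p : ℝ × ℝ => u p * w p) volume := by
    have h : MemLp (u • w) 1 (volume : Measure (ℝ × ℝ)) := by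
      exact hw.smul hu
    exact memLp_one_iff_integrable.mp h
  have Icross : Integrable (fun p : ℝ × ℝ => (u p * w p).re) volume := Imul.re
  -- pointwise expansion of the integrand
  have hpt : ∀ p : ℝ × ℝ,
      ‖((Real.sqrt 2 : ℝ) : ℂ)⁻¹ * (u p + (starRingEnd ℂ) (u (p.1, -p.2)))‖ ^ 2
        = (1 / 2) * ‖u p‖ ^ 2 + (1 / 2) * ‖w p‖ ^ 2 + (u p * w p).re := by
    intro p
    have hnorm : ‖((Real.sqrt 2 : ℝ) : ℂ)⁻¹‖ ^ 2 = 1 / 2 := by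
      rw [norm_inv, Complex.norm_real, Real.norm_eq_abs,
        abs_of_nonneg (Real.sqrt_nonneg 2), inv_pow,
        Real.sq_sqrt (by norm_num : (0:ℝ) ≤ 2)]
      norm_num
    have hsq : ∀ z : ℂ, Complex.normSq z = ‖z‖ ^ 2 := fun z => by
      rw [← Complex.sq_norm]
    have expand : ‖u p + (starRingEnd ℂ) (w p)‖ ^ 2
        = ‖u p‖ ^ 2 + ‖w p‖ ^ 2 + 2 * (u p * w p).re := by
      rw [Complex.sq_norm, Complex.normSq_add,
        Complex.normSq_conj, Complex.conj_conj, hsq, hsq]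
    rw [norm_mul, mul_pow, hnorm, expand]
    ring
  simp only [hpt]
  -- the cross term vanishes, by the antisymmetry coming from `Σ₁^c u = u`
  have hsym2 : ∀ᵐ p : ℝ × ℝ, Sigma1c u (sigma2Equiv p) = u (sigma2Equiv p) :=
    sigma2_mp.quasiMeasurePreserving.ae hsym
  have hF : ∀ᵐ p : ℝ × ℝ, (fun q : ℝ × ℝ => (u q * w q).re) (sigma1Equiv p)
      = -(u p * w p).re := by
    filter_upwards [hsym, hsym2] with p h1 h2
    have e1 : u (-p.1, p.2) = Complex.I * (starRingEnd ℂ) (u p) := by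
      have h1'' : Complex.I * (starRingEnd ℂ) (u (-p.1, p.2)) = u p := h1
      have h1' := congrArg (starRingEnd ℂ) h1''
      simp only [map_mul, Complex.conj_I, Complex.conj_conj] at h1'
      linear_combination Complex.I * h1' + u (-p.1, p.2) * Complex.I_mul_I
    have e2 : u (-p.1, -p.2) = Complex.I * (starRingEnd ℂ) (u (p.1, -p.2)) := by
      have h2'' : Complex.I * (starRingEnd ℂ) (u (-p.1, -p.2)) = u (p.1, -p.2) := h2
      have h2' := congrArg (starRingEnd ℂ) h2''
      simp only [map_mul, Complex.conj_I, Complex.conj_conj] at h2'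
      linear_combination Complex.I * h2' + u (-p.1, -p.2) * Complex.I_mul_I
    have key : u (-p.1, p.2) * u ((-p.1 : ℝ), -p.2)
        = -(starRingEnd ℂ) (u p * u (p.1, -p.2)) := by
      rw [e1, e2, map_mul]
      linear_combination
        ((starRingEnd ℂ) (u p) * (starRingEnd ℂ) (u (p.1, -p.2))) * Complex.I_mul_I
    show (u (-p.1, p.2) * u ((-p.1 : ℝ), -p.2)).re = -(u p * u (p.1, -p.2)).re
    rw [key]
    simp [Complex.conj_re]
  have hcross : (∫ p : ℝ × ℝ, (u p * w p).re) = 0 := by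
    have h1 : (∫ p : ℝ × ℝ, (fun q : ℝ × ℝ => (u q * w q).re) (sigma1Equiv p))
        = ∫ p : ℝ × ℝ, (u p * w p).re :=
      sigma1_mp.integral_comp' (fun q : ℝ × ℝ => (u q * w q).re)
    have h2 : (∫ p : ℝ × ℝ, (fun q : ℝ × ℝ => (u q * w q).re) (sigma1Equiv p))
        = ∫ p : ℝ × ℝ, -(u p * w p).re := integral_congr_ae hF
    have h3 : (∫ p : ℝ × ℝ, -(u p * w p).re) = -∫ p : ℝ × ℝ, (u p * w p).re :=
      integral_neg _
    have := h2.symm.trans h1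
    rw [h3] at this
    linarith
  -- ∫ ‖w‖² = ∫ ‖u‖²
  have hww : (∫ p : ℝ × ℝ, ‖w p‖ ^ 2) = ∫ p : ℝ × ℝ, ‖u p‖ ^ 2 :=
    sigma2_mp.integral_comp' (fun q : ℝ × ℝ => ‖u q‖ ^ 2)
  have Ia : Integrable (fun p : ℝ × ℝ => (1 / 2) * ‖u p‖ ^ 2 + (1 / 2) * ‖w p‖ ^ 2) volume :=
    (Iu.const_mul _).add (Iw.const_mul _)
  rw [integral_add Ia Icross, integral_add (Iu.const_mul (1 / 2)) (Iw.const_mul (1 / 2)),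
    integral_const_mul, integral_const_mul, hww, hcross]
  ring

end
end
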